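/- Let K ∈ ℕ, p_w, p_u ∈ (1,∞), ξ₁, ξ₂ > 0 and ‖α‖_∞ ≥ 1, and let A ∈ ℝ^{(K+1)×(K+1)}_{++} be the matrix with A_{l,m} = 4(p_w'−1)ξ₁ for l,m ∈ [K], A_{l,K+1} = 2(p_w'−1)(2ξ₂ + ‖α‖_∞) for l ∈ [K], A_{K+1,m} = 2(p_u'−1)(2ξ₁ + 1) for m ∈ [K], and A_{K+1,K+1} = 2(p_u'−1)(2ξ₂ + ‖α‖_∞ − 1). If p_w > 4(K+1)ξ₁ + 3 and p_u > 2(K+1)(‖α‖_∞ + 2ξ₂) − 1, then the spectral radius of A satisfies ρ(A) < 1. -/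

import Mathlib

noncomputable section

open Real Filter Topology

/-- Parameter space of a one-hidden-layer network: pairs `(w, u)`. -/
abbrev PV (K n1 d : ℕ) : Type :=
  (Fin K → Fin n1 → ℝ) × (Fin n1 → Fin d → ℝ)

/-- Entrywise `p`-norm of a vector. -/
def pnorm {ι : Type} [Fintype ι] (p : ℝ) (x : ι → ℝ) : ℝ :=
  (∑ i, |x i| ^ p) ^ (1 / p)

/-- Entrywise `p`-norm of a matrix. -/
def pnormM {ι κ : Type} [Fintype ι] [Fintype κ] (p : ℝ) (x : ι → κ → ℝ) : ℝ :=
  (∑ i, ∑ j, |x i j| ^ p) ^ (1 / p)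

/-- Hölder conjugate `p' = p/(p-1)`. -/
def hconj (p : ℝ) : ℝ := p / (p - 1)

/-- `ψ_p(x) = sign(x) |x|^{p-1}`. -/
def psi (p x : ℝ) : ℝ := Real.sign x * |x| ^ (p - 1)

/-- The constraint set `S₊`. -/
def Splus (K n1 d : ℕ) (pw pu ρw ρu : ℝ) : Set (PV K n1 d) :=
  {z | (∀ i j, 0 ≤ z.1 i j) ∧ (∀ a b, 0 ≤ z.2 a b) ∧
    (∀ i, pnorm pw (z.1 i) = ρw) ∧ pnormM pu z.2 = ρu}

/-- The constraint set `S₊₊` (strictly positive entries). -/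
def Spp (K n1 d : ℕ) (pw pu ρw ρu : ℝ) : Set (PV K n1 d) :=
  {z | (∀ i j, 0 < z.1 i j) ∧ (∀ a b, 0 < z.2 a b) ∧
    (∀ i, pnorm pw (z.1 i) = ρw) ∧ pnormM pu z.2 = ρu}

/-- The set `B₊₊` (strictly positive entries, norms at most `ρ`). -/
def Bpp (K n1 d : ℕ) (pw pu ρw ρu : ℝ) : Set (PV K n1 d) :=
  {z | (∀ i j, 0 < z.1 i j) ∧ (∀ a b, 0 < z.2 a b) ∧
    (∀ i, pnorm pw (z.1 i) ≤ ρw) ∧ pnormM pu z.2 ≤ ρu}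

/-- Coordinate direction for the entry `w_{a,b}`. -/
def eW {K n1 d : ℕ} (a : Fin K) (b : Fin n1) : PV K n1 d :=
  ((fun i j => if i = a ∧ j = b then 1 else 0), 0)

/-- Coordinate direction for the entry `u_{a,b}`. -/
def eU {K n1 d : ℕ} (a : Fin n1) (b : Fin d) : PV K n1 d :=
  (0, fun i j => if i = a ∧ j = b then 1 else 0)

/-- Partial derivative `∂Φ/∂w_{a,b}`. -/
def gradW {K n1 d : ℕ} (Φ : PV K n1 d → ℝ) (z : PV K n1 d) (a : Fin K) (b : Fin n1) : ℝ :=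
  fderiv ℝ Φ z (eW a b)

/-- Partial derivative `∂Φ/∂u_{a,b}`. -/
def gradU {K n1 d : ℕ} (Φ : PV K n1 d → ℝ) (z : PV K n1 d) (a : Fin n1) (b : Fin d) : ℝ :=
  fderiv ℝ Φ z (eU a b)

/-- The power-iteration map `G^Φ`. -/
def GPhi {K n1 d : ℕ} (pw pu ρw ρu : ℝ) (Φ : PV K n1 d → ℝ) (z : PV K n1 d) : PV K n1 d :=
  ((fun i j => ρw * psi (hconj pw) (gradW Φ z i j) /
      pnorm pw (fun j' => psi (hconj pw) (gradW Φ z i j'))),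
    fun a b => ρu * psi (hconj pu) (gradU Φ z a b) /
      pnormM pu (fun a' b' => psi (hconj pu) (gradU Φ z a' b')))

/-- One-hidden-layer network `f_r(w,u)(x)`. -/
def net {K n1 d : ℕ} (α : Fin n1 → ℝ) (w : Fin K → Fin n1 → ℝ) (u : Fin n1 → Fin d → ℝ)
    (x : Fin d → ℝ) (r : Fin K) : ℝ :=
  ∑ l, w r l * (∑ m, u l m * x m) ^ α l

/-- Cross-entropy loss. -/
def loss {K : ℕ} (y : Fin K) (g : Fin K → ℝ) : ℝ :=
  -g y + Real.log (∑ j, Real.exp (g j))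

/-- The objective `Φ`. -/
def Phi {K n1 d n : ℕ} (α : Fin n1 → ℝ) (x : Fin n → Fin d → ℝ) (y : Fin n → Fin K)
    (ε : ℝ) (z : PV K n1 d) : ℝ :=
  (1 / (n : ℝ)) * ∑ i, (-loss (y i) (net α z.1 z.2 (x i)) + ∑ r, net α z.1 z.2 (x i) r)
    + ε * ((∑ r, ∑ l, z.1 r l) + ∑ l, ∑ m, z.2 l m)

/-- Spectral radius of a real square matrix: maximum modulus of its (complex) eigenvalues. -/
def specRad {m : ℕ} (A : Matrix (Fin m) (Fin m) ℝ) : ℝ :=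
  sSup {r : ℝ | ∃ μ : ℂ, μ ∈ spectrum ℂ (A.map Complex.ofReal) ∧ r = ‖μ‖}

/-- Maximum of `g` over `Fin n`, `n > 0`. -/
def finMax {n : ℕ} (hn : 0 < n) (g : Fin n → ℝ) : ℝ :=
  Finset.univ.sup' (Finset.univ_nonempty_iff.mpr (Fin.pos_iff_nonempty.mp hn)) g

/-- Weighted Thompson metric `μ` with weights `γ`. -/
def thomW {K n1 d : ℕ} (γ : Fin (K + 1) → ℝ) (z z' : PV K n1 d) : ℝ :=
  (∑ i : Fin K, γ i.castSucc *
      ‖(fun j : Fin n1 => Real.log (z.1 i j) - Real.log (z'.1 i j))‖)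
    + γ (Fin.last K) *
      ‖(fun (a : Fin n1) (b : Fin d) => Real.log (z.2 a b) - Real.log (z'.2 a b))‖

/-- The function `Ψ^α_{p,q}` from the paper. -/
def PsiF {r : ℕ} (α : Fin r → ℝ) (p q : ℝ) (δ : Fin r → ℝ) (t : ℝ) : ℝ :=
  let J : Finset (Fin r) := Finset.univ.filter fun l => α l * p ≤ q
  let Jc : Finset (Fin r) := Finset.univ.filter fun l => q < α l * p
  let ab : ℝ := if h : J.Nonempty then J.inf' h α else 0
  ((∑ l ∈ J, (δ l * t ^ α l) ^ (p * q / (q - ab * p))) ^ (1 - ab * p / q)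
    + if h : Jc.Nonempty then Jc.sup' h fun j => (δ j * t ^ α j) ^ p else 0) ^ (1 / p)

end

lemma spectrum_bound_aux {m : ℕ} (M : Matrix (Fin (m+1)) (Fin (m+1)) ℝ)
    (v : Fin (m+1) → ℝ) (hv : ∀ i, 0 < v i) (c : ℝ)
    (hcol : ∀ j, ∑ i, v i * |M i j| ≤ c * v j)
    (μ : ℂ) (hμ : μ ∈ spectrum ℂ (M.map Complex.ofReal)) :
    ‖μ‖ ≤ c := by
  rw [spectrum.mem_iff] at hμ
  rw [Matrix.isUnit_iff_isUnit_det, isUnit_iff_ne_zero, not_not] at hμ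
  have hdet : (Matrix.transpose
      (algebraMap ℂ (Matrix (Fin (m+1)) (Fin (m+1)) ℂ) μ - M.map Complex.ofReal)).det = 0 := by
    rw [Matrix.det_transpose]; exact hμ
  obtain ⟨x, hx0, hx⟩ := (Matrix.exists_mulVec_eq_zero_iff).mpr hdet
  have key : ∀ i, μ * x i = ∑ j, (M j i : ℂ) * x j := by
    intro i
    have h := congrFun hx i
    simp only [Matrix.mulVec, dotProduct, Matrix.sub_apply, Matrix.transpose_apply,
      Matrix.map_apply, Matrix.algebraMap_matrix_apply, sub_mul, Finset.sum_sub_distrib,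
      ite_mul, zero_mul, Finset.sum_ite_eq', Finset.mem_univ, if_true, Pi.zero_apply] at h
    simpa using sub_eq_zero.mp h
  -- pick index maximizing |x i| / v i
  obtain ⟨i0, -, hi0⟩ := Finset.exists_max_image Finset.univ
    (fun i => ‖x i‖ / v i) ⟨0, Finset.mem_univ 0⟩
  set t : ℝ := ‖x i0‖ / v i0 with ht
  have hxle : ∀ j, ‖x j‖ ≤ v j * t := by
    intro j
    have := hi0 j (Finset.mem_univ j)
    calc ‖x j‖ = (‖x j‖ / v j) * v j :=
          (div_mul_cancel₀ _ (hv j).ne').symm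
      _ ≤ t * v j := by
          exact mul_le_mul_of_nonneg_right this (hv j).le
      _ = v j * t := mul_comm _ _
  have hxpos : 0 < ‖x i0‖ := by
    obtain ⟨j, hj⟩ := Function.ne_iff.mp hx0
    have h1 : 0 < ‖x j‖ / v j := div_pos (by simpa using hj) (hv j)
    have h2 : 0 < ‖x i0‖ / v i0 := lt_of_lt_of_le h1 (hi0 j (Finset.mem_univ j))
    rcases div_pos_iff.mp h2 with ⟨h, -⟩ | ⟨-, h⟩
    · exact h
    · exact absurd (hv i0) (not_lt.mpr h.le)
  have main : ‖μ‖ * ‖x i0‖ ≤ c * ‖x i0‖ := by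
    calc ‖μ‖ * ‖x i0‖ = ‖μ * x i0‖ := (norm_mul _ _).symm
      _ = ‖∑ j, (M j i0 : ℂ) * x j‖ := by rw [key]
      _ ≤ ∑ j, ‖(M j i0 : ℂ) * x j‖ := norm_sum_le _ _
      _ = ∑ j, |M j i0| * ‖x j‖ := by
          simp [norm_mul, Complex.norm_real, Real.norm_eq_abs]
      _ ≤ ∑ j, |M j i0| * (v j * t) := by
          apply Finset.sum_le_sum
          intro j _
          exact mul_le_mul_of_nonneg_left (hxle j) (abs_nonneg _)
      _ = (∑ j, v j * |M j i0|) * t := by rw [Finset.sum_mul]; congr 1; funext j; ring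
      _ ≤ (c * v i0) * t := by
          apply mul_le_mul_of_nonneg_right (hcol i0)
          exact div_nonneg (norm_nonneg _) (hv i0).le
      _ = c * ‖x i0‖ := by
          rw [ht, mul_assoc, mul_div_cancel₀ _ (hv i0).ne']
  exact le_of_mul_le_mul_right main hxpos

/-- Explicit lower bounds on `p_w, p_u` ensuring `ρ(A) < 1` for the matrix `A`
of the one-hidden-layer convergence theorem. -/
theorem statement6 (K : ℕ) (pw pu ξ1 ξ2 nα : ℝ)
    (hpw : 1 < pw) (hpu : 1 < pu) (hξ1 : 0 < ξ1) (hξ2 : 0 < ξ2) (hnα : 1 ≤ nα)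
    (A : Matrix (Fin (K + 1)) (Fin (K + 1)) ℝ)
    (hA : A = Matrix.of fun i j =>
      if i = Fin.last K then
        if j = Fin.last K then 2 * (hconj pu - 1) * (2 * ξ2 + nα - 1)
        else 2 * (hconj pu - 1) * (2 * ξ1 + 1)
      else
        if j = Fin.last K then 2 * (hconj pw - 1) * (2 * ξ2 + nα)
        else 4 * (hconj pw - 1) * ξ1)
    (hw : pw > 4 * ((K : ℝ) + 1) * ξ1 + 3)
    (hu : pu > 2 * ((K : ℝ) + 1) * (nα + 2 * ξ2) - 1) :
    specRad A < 1 := by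
  have hpw1 : (0:ℝ) < pw - 1 := by linarith
  have hpu1 : (0:ℝ) < pu - 1 := by linarith
  have hcw : hconj pw - 1 = 1 / (pw - 1) := by
    unfold hconj; field_simp; ring
  have hcu : hconj pu - 1 = 1 / (pu - 1) := by
    unfold hconj; field_simp; ring
  set c1 : ℝ := (4 * ((K:ℝ)+1) * ξ1 + 2) / (pw - 1) with hc1def
  set c2 : ℝ := (2 * ((K:ℝ)+1) * (nα + 2*ξ2) - 2) / (pu - 1) with hc2def
  set c : ℝ := max c1 c2 with hcdef
  have hc1 : c1 < 1 := (div_lt_one hpw1).mpr (by linarith)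
  have hc2 : c2 < 1 := (div_lt_one hpu1).mpr (by nlinarith)
  have hc : c < 1 := max_lt hc1 hc2
  have hc0 : 0 ≤ c := le_max_of_le_left (div_nonneg (by positivity) hpw1.le)
  set v : Fin (K+1) → ℝ := fun i => if i = Fin.last K then pu - 1 else pw - 1 with hvdef
  have hv : ∀ i, 0 < v i := by
    intro i; simp only [hvdef]; split <;> assumption
  have hna0 : (0:ℝ) ≤ 2*ξ2 + nα := by linarith
  have hna1 : (0:ℝ) ≤ 2*ξ2 + nα - 1 := by linarith
  have hcol : ∀ j, ∑ i, v i * |A i j| ≤ c * v j := by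
    intro j
    by_cases hj : j = Fin.last K
    · have hsum : ∑ i, v i * |A i j| = (K:ℝ) * (2*(2*ξ2+nα)) + 2*(2*ξ2+nα-1) := by
        rw [Fin.sum_univ_castSucc]
        have h1 : ∀ i : Fin K, v i.castSucc * |A i.castSucc j| = 2*(2*ξ2+nα) := by
          intro i
          have hne : i.castSucc ≠ Fin.last K := (Fin.castSucc_lt_last i).ne
          rw [hA]
          simp only [hvdef, Matrix.of_apply, if_neg hne, if_pos hj]
          rw [hcw, abs_of_nonneg (by
            apply mul_nonneg (by positivity) hna0)]
          field_simp
        have h2 : v (Fin.last K) * |A (Fin.last K) j| = 2*(2*ξ2+nα-1) := by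
          rw [hA]
          simp only [hvdef, Matrix.of_apply, if_pos hj, eq_self_iff_true, if_true]
          rw [hcu, abs_of_nonneg (by apply mul_nonneg (by positivity) hna1)]
          field_simp
        rw [h2, Finset.sum_congr rfl (fun i _ => h1 i), Finset.sum_const,
          Finset.card_univ, Fintype.card_fin, nsmul_eq_mul]
      rw [hsum]
      have hvj : v j = pu - 1 := by simp [hvdef, hj]
      rw [hvj]
      calc (K:ℝ) * (2*(2*ξ2+nα)) + 2*(2*ξ2+nα-1) = c2 * (pu - 1) := by
            rw [hc2def]; field_simp; ring
        _ ≤ c * (pu - 1) := mul_le_mul_of_nonneg_right (le_max_right _ _) hpu1.le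
    · have hsum : ∑ i, v i * |A i j| = (K:ℝ) * (4*ξ1) + 2*(2*ξ1+1) := by
        rw [Fin.sum_univ_castSucc]
        have h1 : ∀ i : Fin K, v i.castSucc * |A i.castSucc j| = 4*ξ1 := by
          intro i
          have hne : i.castSucc ≠ Fin.last K := (Fin.castSucc_lt_last i).ne
          rw [hA]
          simp only [hvdef, Matrix.of_apply, if_neg hne, if_neg hj]
          rw [hcw, abs_of_nonneg (by positivity)]
          field_simp
        have h2 : v (Fin.last K) * |A (Fin.last K) j| = 2*(2*ξ1+1) := by
          rw [hA]
          simp only [hvdef, Matrix.of_apply, if_neg hj, eq_self_iff_true, if_true]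
          rw [hcu, abs_of_nonneg (mul_nonneg
            (mul_nonneg (by norm_num) (one_div_nonneg.mpr hpu1.le)) (by positivity))]
          field_simp
        rw [h2, Finset.sum_congr rfl (fun i _ => h1 i), Finset.sum_const,
          Finset.card_univ, Fintype.card_fin, nsmul_eq_mul]
      rw [hsum]
      have hvj : v j = pw - 1 := by simp [hvdef, hj]
      rw [hvj]
      calc (K:ℝ) * (4*ξ1) + 2*(2*ξ1+1) = c1 * (pw - 1) := by
            rw [hc1def]; field_simp; ring
        _ ≤ c * (pw - 1) := mul_le_mul_of_nonneg_right (le_max_left _ _) hpw1.le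
  have hbound : ∀ r ∈ {r : ℝ | ∃ μ : ℂ, μ ∈ spectrum ℂ (A.map Complex.ofReal) ∧ r = ‖μ‖},
      r ≤ c := by
    rintro r ⟨μ, hμ, rfl⟩
    exact spectrum_bound_aux A v hv c hcol μ hμ
  have := Real.sSup_le hbound hc0
  calc specRad A ≤ c := this
    _ < 1 := hc
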